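/- Let T be a set, h : T → T a map, and R ⊆ S ⊆ T subsets. Suppose x ∈ R and that there exists n ≥ 1 with hⁿ(x) ∈ R, so that the first return time λ_R(x) is defined. Then there exist q ≥ 1 and natural numbers 0 = β₀ < β₁ < ⋯ < β_q = λ_R(x) such that: (i) for every 1 ≤ k ≤ λ_R(x), h^k(x) ∈ S if and only if k = β_j for some 1 ≤ j ≤ q; and (ii) for every 1 ≤ j ≤ q, the point h^{β_{j−1}}(x) lies in S, its first return time λ_S(h^{β_{j−1}}(x)) is defined, and β_j − β_{j−1} = λ_S(h^{β_{j−1}}(x)). -/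

import Mathlib

/-- The first return time `λ_A(z) := min {n ≥ 1 : hⁿ(z) ∈ A}` of a point `z` to a
set `A` under iteration of `h`. -/
noncomputable def firstReturn {T : Type} (h : T → T) (A : Set T) (z : T) : ℕ :=
  sInf {n : ℕ | 1 ≤ n ∧ h^[n] z ∈ A}

/-- Cumulative return times to `S`. -/
noncomputable def betaAux {T : Type} (h : T → T) (S : Set T) (x : T) : ℕ → ℕ
  | 0 => 0
  | j + 1 => betaAux h S x j + firstReturn h S (h^[betaAux h S x j] x)

theorem stmt_16 {T : Type} (h : T → T) (R S : Set T) (hRS : R ⊆ S)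
    (x : T) (hx : x ∈ R) (hret : ∃ n, 1 ≤ n ∧ h^[n] x ∈ R) :
    ∃ (q : ℕ) (β : ℕ → ℕ), 1 ≤ q ∧ β 0 = 0 ∧
      (∀ j, j < q → β j < β (j + 1)) ∧
      β q = firstReturn h R x ∧
      (∀ kk, 1 ≤ kk → kk ≤ firstReturn h R x →
        (h^[kk] x ∈ S ↔ ∃ j, 1 ≤ j ∧ j ≤ q ∧ kk = β j)) ∧
      (∀ j, 1 ≤ j → j ≤ q →
        h^[β (j - 1)] x ∈ S ∧
        (∃ n, 1 ≤ n ∧ h^[n] (h^[β (j - 1)] x) ∈ S) ∧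
        β j - β (j - 1) = firstReturn h S (h^[β (j - 1)] x)) := by
  set L := firstReturn h R x with hLdef
  have hmemL : 1 ≤ L ∧ h^[L] x ∈ R := Nat.sInf_mem (hret : {n : ℕ | 1 ≤ n ∧ h^[n] x ∈ R}.Nonempty)
  obtain ⟨hL1, hLR⟩ := hmemL
  set g := betaAux h S x with hgdef
  -- key step lemma
  have stepA : ∀ j, h^[g j] x ∈ S → g j < L →
      g j < g (j + 1) ∧ g (j + 1) ≤ L ∧ h^[g (j + 1)] x ∈ S := by
    intro j hS hlt
    set b := g j with hb
    set y := h^[b] x with hy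
    have hmemN : (L - b) ∈ {n : ℕ | 1 ≤ n ∧ h^[n] y ∈ S} := by
      constructor
      · omega
      · have : h^[L - b] y = h^[L] x := by
          rw [hy, ← Function.iterate_add_apply]
          congr 1
          omega
        rw [this]; exact hRS hLR
    have hne : {n : ℕ | 1 ≤ n ∧ h^[n] y ∈ S}.Nonempty := ⟨L - b, hmemN⟩
    have hfr : 1 ≤ firstReturn h S y ∧ h^[firstReturn h S y] y ∈ S := Nat.sInf_mem hne
    obtain ⟨hfr1, hfrS⟩ := hfr
    have hfrle : firstReturn h S y ≤ L - b := Nat.sInf_le hmemN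
    have hgsucc : g (j + 1) = b + firstReturn h S y := rfl
    refine ⟨by omega, by omega, ?_⟩
    rw [hgsucc, Nat.add_comm, Function.iterate_add_apply]
    exact hfrS
  -- invariant
  have invB : ∀ j, (∀ i, i < j → g i < L) → g j ≤ L ∧ h^[g j] x ∈ S ∧ j ≤ g j := by
    intro j
    induction j with
    | zero => intro _; exact ⟨Nat.zero_le _, by show h^[0] x ∈ S; simpa using hRS hx, le_refl _⟩
    | succ j ih =>
      intro hall
      have hj : ∀ i, i < j → g i < L := fun i hi => hall i (by omega)
      obtain ⟨_, hS, hle⟩ := ih hj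
      have hgj : g j < L := hall j (by omega)
      obtain ⟨h1, h2, h3⟩ := stepA j hS hgj
      exact ⟨h2, h3, by omega⟩
  -- existence of q
  have hex : ∃ j, g j = L := by
    by_contra hno
    push_neg at hno
    have hall : ∀ j, g j < L := by
      intro j
      induction j using Nat.strong_induction_on with
      | _ j ih =>
        have := invB j (fun i hi => ih i hi)
        have := hno j
        omega
    have := invB (L + 1) (fun i _ => hall i)
    have := hall (L + 1)
    omega
  set q := Nat.find hex with hq
  have hqL : g q = L := Nat.find_spec hex
  have hltq : ∀ i, i < q → g i < L := by
    intro i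
    induction i using Nat.strong_induction_on with
    | _ i ih =>
      intro hi
      have h1 := invB i (fun i' hi' => ih i' hi' (by omega))
      have h2 : g i ≠ L := Nat.find_min hex hi
      omega
  have hSall : ∀ j, j ≤ q → h^[g j] x ∈ S ∧ g j ≤ L := by
    intro j hj
    rcases eq_or_lt_of_le hj with heq | hj'
    · have := invB j (fun i hi => hltq i (by omega))
      exact ⟨this.2.1, this.1⟩
    · have := invB j (fun i hi => hltq i (by omega))
      exact ⟨this.2.1, this.1⟩
  have hq1 : 1 ≤ q := by
    by_contra hq0
    have : q = 0 := by omega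
    rw [this] at hqL
    have : g 0 = 0 := rfl
    omega
  refine ⟨q, g, hq1, rfl, ?_, hqL, ?_, ?_⟩
  · -- strict monotonicity
    intro j hj
    exact (stepA j (hSall j (le_of_lt hj)).1 (hltq j hj)).1
  · -- characterization (i)
    intro kk hk1 hk2
    constructor
    · intro hkS
      have hex2 : ∃ j, kk ≤ g j := ⟨q, by omega⟩
      set j0 := Nat.find hex2 with hj0
      have hj0spec : kk ≤ g j0 := Nat.find_spec hex2
      have hj0le : j0 ≤ q := Nat.find_le (by omega)
      have hj01 : 1 ≤ j0 := by
        by_contra hc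
        have : j0 = 0 := by omega
        rw [this] at hj0spec
        have : g 0 = 0 := rfl
        omega
      set i := j0 - 1 with hi
      have hiq : i < q := by omega
      have hilt : g i < kk := by
        have := Nat.find_min hex2 (show i < j0 by omega)
        omega
      -- first return from h^[g i] x is ≤ kk - g i
      have hySmem : (kk - g i) ∈ {n : ℕ | 1 ≤ n ∧ h^[n] (h^[g i] x) ∈ S} := by
        constructor
        · omega
        · have : h^[kk - g i] (h^[g i] x) = h^[kk] x := by
            rw [← Function.iterate_add_apply]
            congr 1
            omega
          rw [this]; exact hkS
      have hfrle : firstReturn h S (h^[g i] x) ≤ kk - g i := Nat.sInf_le hySmem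
      have hsucc : g (i + 1) = g i + firstReturn h S (h^[g i] x) := rfl
      have hij : i + 1 = j0 := by omega
      refine ⟨j0, hj01, hj0le, ?_⟩
      rw [← hij, hsucc]
      have : g (i + 1) ≥ kk := by rw [hij]; exact hj0spec
      rw [hsucc] at this
      omega
    · rintro ⟨j, hj1, hjq, rfl⟩
      exact (hSall j hjq).1
  · -- part (ii)
    intro j hj1 hjq
    set i := j - 1 with hi
    have hiq : i < q := by omega
    have hS : h^[g i] x ∈ S := (hSall i (le_of_lt hiq)).1
    have hilt : g i < L := hltq i hiq
    have hmemN : (L - g i) ∈ {n : ℕ | 1 ≤ n ∧ h^[n] (h^[g i] x) ∈ S} := by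
      constructor
      · omega
      · have : h^[L - g i] (h^[g i] x) = h^[L] x := by
          rw [← Function.iterate_add_apply]
          congr 1
          omega
        rw [this]; exact hRS hLR
    refine ⟨hS, ⟨L - g i, hmemN.1, hmemN.2⟩, ?_⟩
    have hij : i + 1 = j := by omega
    have hsucc : g (i + 1) = g i + firstReturn h S (h^[g i] x) := rfl
    rw [← hij, hsucc]
    omega
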